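/- Under single-peaked preferences with an odd number of voters, any set consisting of the top k candidates in the Condorcet ranking (equivalently, any winning set of the multi-winner Copeland method) is both adjacent in the left-right candidate ordering and Gehrlein-stable. -/

import Mathlib

open Finset

/-- Each voter's preference is a strict total (linear) order on the candidates. -/
def StrictPrefs {m N : ℕ} (P : Fin N → Fin m → Fin m → Prop) : Prop :=
  ∀ v : Fin N, IsStrictTotalOrder (Fin m) (P v)

/-- Single-peakedness w.r.t. the left-right order on `Fin m`: for `i < j < k`,
no voter ranks both `C_i` and `C_k` above `C_j`. -/
def SinglePeaked {m N : ℕ} (P : Fin N → Fin m → Fin m → Prop) : Prop :=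
  ∀ (v : Fin N) (i j k : Fin m), i < j → j < k → ¬ (P v i j ∧ P v k j)

/-- Number of voters preferring `a` to `b`. -/
def prefCount {m N : ℕ} (P : Fin N → Fin m → Fin m → Prop)
    [∀ v a b, Decidable (P v a b)] (a b : Fin m) : ℕ :=
  (univ.filter fun v => P v a b).card

/-- `a` majority-defeats `b`: strictly more than `N/2` voters prefer `a` to `b`. -/
def Defeats {m N : ℕ} (P : Fin N → Fin m → Fin m → Prop)
    [∀ v a b, Decidable (P v a b)] (a b : Fin m) : Prop :=
  2 * prefCount P a b > N

instance {m N : ℕ} (P : Fin N → Fin m → Fin m → Prop)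
    [∀ v a b, Decidable (P v a b)] (a b : Fin m) : Decidable (Defeats P a b) :=
  inferInstanceAs (Decidable (2 * prefCount P a b > N))

/-- Voter `v` approves candidate `a` under Bloc voting with `k` winners:
`a` is among `v`'s top `k` candidates. -/
def Approves {m N : ℕ} (P : Fin N → Fin m → Fin m → Prop)
    [∀ v a b, Decidable (P v a b)] (k : ℕ) (v : Fin N) (a : Fin m) : Prop :=
  (univ.filter fun b => P v b a).card < k

instance {m N : ℕ} (P : Fin N → Fin m → Fin m → Prop)
    [∀ v a b, Decidable (P v a b)] (k : ℕ) (v : Fin N) (a : Fin m) :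
    Decidable (Approves P k v a) :=
  inferInstanceAs (Decidable ((univ.filter fun b => P v b a).card < k))

/-- Bloc score of candidate `a`: the number of voters who approve `a`. -/
def blocScore {m N : ℕ} (P : Fin N → Fin m → Fin m → Prop)
    [∀ v a b, Decidable (P v a b)] (k : ℕ) (a : Fin m) : ℕ :=
  (univ.filter fun v => Approves P k v a).card

/-- `W` is a winning set under Bloc voting with `k` winners (strict vote totals):
`W` has `k` members and each member has strictly more approvals than each non-member. -/
def IsWinningSet {m N : ℕ} (P : Fin N → Fin m → Fin m → Prop)
    [∀ v a b, Decidable (P v a b)] (k : ℕ) (W : Finset (Fin m)) : Prop :=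
  W.card = k ∧ ∀ w ∈ W, ∀ c ∉ W, blocScore P k w > blocScore P k c

section AuxSP

variable {m N : ℕ} (P : Fin N → Fin m → Fin m → Prop) [∀ v a b, Decidable (P v a b)]

lemma prefCount_mono' {a b c d : Fin m} (h : ∀ v, P v a b → P v c d) :
    prefCount P a b ≤ prefCount P c d := by
  apply Finset.card_le_card
  intro v hv
  simp only [Finset.mem_filter, Finset.mem_univ, true_and] at *
  exact h v hv

lemma vw1 (hP : StrictPrefs P) (hSP : SinglePeaked P) (v : Fin N) {i j l : Fin m}
    (hij : i < j) (hjl : j < l) (h : P v l i) : P v j i := by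
  rcases (by haveI := hP v; exact trichotomous_of (P v) j i : P v j i ∨ j = i ∨ P v i j) with h1 | h1 | h1
  · exact h1
  · exact absurd h1.symm (ne_of_lt hij)
  · rcases (by haveI := hP v; exact trichotomous_of (P v) j l : P v j l ∨ j = l ∨ P v l j) with h2 | h2 | h2
    · exact (hP v).trans _ _ _ h2 h
    · exact absurd h2 (ne_of_lt hjl)
    · exact absurd ⟨h1, h2⟩ (hSP v i j l hij hjl)

lemma vw2 (hP : StrictPrefs P) (hSP : SinglePeaked P) (v : Fin N) {i j l : Fin m}
    (hij : i < j) (hjl : j < l) (h : P v i l) : P v j l := by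
  rcases (by haveI := hP v; exact trichotomous_of (P v) j l : P v j l ∨ j = l ∨ P v l j) with h1 | h1 | h1
  · exact h1
  · exact absurd h1 (ne_of_lt hjl)
  · have : P v i j := (hP v).trans _ _ _ h h1
    exact absurd ⟨this, h1⟩ (hSP v i j l hij hjl)

lemma defeats_irrefl (hP : StrictPrefs P) (a : Fin m) : ¬ Defeats P a a := by
  have : prefCount P a a = 0 := by
    unfold prefCount
    rw [Finset.card_eq_zero, Finset.filter_eq_empty_iff]
    intro v _
    exact (hP v).irrefl a
  unfold Defeats
  omega

lemma prefCount_add (hP : StrictPrefs P) {a b : Fin m} (hab : a ≠ b) :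
    prefCount P a b + prefCount P b a = N := by
  have key : ∀ v : Fin N, P v b a ↔ ¬ P v a b := by
    intro v
    constructor
    · intro h h'
      exact (hP v).irrefl a ((hP v).trans _ _ _ h' h)
    · intro h
      rcases (by haveI := hP v; exact trichotomous_of (P v) a b : P v a b ∨ a = b ∨ P v b a) with h1 | h1 | h1
      · exact absurd h1 h
      · exact absurd h1 hab
      · exact h1
  unfold prefCount
  have : (Finset.univ.filter fun v => P v b a)
      = Finset.univ.filter fun v => ¬ P v a b := by
    apply Finset.filter_congr
    intro v _
    simp [key v]
  rw [this, Finset.card_filter_add_card_filter_not]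
  simp

lemma defeats_total (hP : StrictPrefs P) (hN : Odd N) {a b : Fin m} (hab : a ≠ b) :
    Defeats P a b ∨ Defeats P b a := by
  have h := prefCount_add P hP hab
  obtain ⟨t, ht⟩ := hN
  unfold Defeats
  omega

lemma defeats_asymm (hP : StrictPrefs P) {a b : Fin m}
    (h : Defeats P a b) : ¬ Defeats P b a := by
  by_cases hab : a = b
  · subst hab; exact absurd h (defeats_irrefl P hP a)
  · have hadd := prefCount_add P hP hab
    unfold Defeats at *
    omega

lemma M1 (hP : StrictPrefs P) (hSP : SinglePeaked P) {i j l : Fin m}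
    (hij : i < j) (hjl : j < l) (h : Defeats P l i) : Defeats P j i := by
  have := prefCount_mono' P (fun v => vw1 P hP hSP v hij hjl)
  unfold Defeats at *
  omega

lemma M2 (hP : StrictPrefs P) (hSP : SinglePeaked P) {i j l : Fin m}
    (hij : i < j) (hjl : j < l) (h : Defeats P i l) : Defeats P j l := by
  have := prefCount_mono' P (fun v => vw2 P hP hSP v hij hjl)
  unfold Defeats at *
  omega

lemma defeats_trans (hP : StrictPrefs P) (hSP : SinglePeaked P) (hN : Odd N)
    {x y z : Fin m} (hxy : Defeats P x y) (hyz : Defeats P y z) :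
    Defeats P x z := by
  have hxy' : x ≠ y := by rintro rfl; exact defeats_irrefl P hP x hxy
  have hyz' : y ≠ z := by rintro rfl; exact defeats_irrefl P hP y hyz
  have hxz' : x ≠ z := by rintro rfl; exact defeats_asymm P hP hxy hyz
  by_contra hxz
  have hzx : Defeats P z x := (defeats_total P hP hN hxz').resolve_left hxz
  rcases hxy'.lt_or_gt with h1 | h1 <;> rcases hyz'.lt_or_gt with h2 | h2 <;>
    rcases hxz'.lt_or_gt with h3 | h3
  · exact defeats_asymm P hP hxy (M1 P hP hSP h1 h2 hzx)
  · exact absurd (h1.trans h2) (lt_asymm h3)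
  · exact defeats_asymm P hP hyz (M2 P hP hSP h3 h2 hxy)
  · exact hxz (M1 P hP hSP h3 h1 hyz)
  · exact hxz (M2 P hP hSP h1 h3 hyz)
  · exact defeats_asymm P hP hyz (M1 P hP hSP h2 h3 hxy)
  · exact absurd (h2.trans h1) (lt_asymm h3)
  · exact defeats_asymm P hP hxy (M2 P hP hSP h2 h1 hzx)

lemma score_lt_imp (hP : StrictPrefs P) (hSP : SinglePeaked P) (hN : Odd N)
    {a b : Fin m}
    (h : (Finset.univ.filter fun x => Defeats P x a).card <
         (Finset.univ.filter fun x => Defeats P x b).card) :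
    Defeats P a b := by
  have hab : a ≠ b := by rintro rfl; exact lt_irrefl _ h
  rcases defeats_total P hP hN hab with h1 | h1
  · exact h1
  · exfalso
    have hsub : (Finset.univ.filter fun x => Defeats P x b)
        ⊆ (Finset.univ.filter fun x => Defeats P x a) := by
      intro x hx
      simp only [Finset.mem_filter, Finset.mem_univ, true_and] at *
      exact defeats_trans P hP hSP hN hx h1
    have hb : b ∈ (Finset.univ.filter fun x => Defeats P x a) := by
      simp only [Finset.mem_filter, Finset.mem_univ, true_and]
      exact h1
    have hb' : b ∉ (Finset.univ.filter fun x => Defeats P x b) := by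
      simp only [Finset.mem_filter, Finset.mem_univ, true_and]
      exact defeats_irrefl P hP b
    have := Finset.card_lt_card ((Finset.ssubset_iff_of_subset hsub).2 ⟨b, hb, hb'⟩)
    omega

end AuxSP

/-- The top `k` candidates of the Condorcet ranking (the winning set of
the multi-winner Copeland method) form a set that is both an interval of consecutive
candidates and Gehrlein-stable. -/
theorem copeland_winning_set_adjacent_and_stable {m N : ℕ}
    (P : Fin N → Fin m → Fin m → Prop) [∀ v a b, Decidable (P v a b)]
    (hP : StrictPrefs P) (hSP : SinglePeaked P) (hN : Odd N)
    (k : ℕ) (W : Finset (Fin m))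
    (hW : W = univ.filter fun a => (univ.filter fun b => Defeats P b a).card < k) :
    (∀ a ∈ W, ∀ b ∈ W, ∀ c : Fin m, a ≤ c → c ≤ b → c ∈ W) ∧
    (∀ w ∈ W, ∀ c ∉ W, Defeats P w c) := by
  classical
  have stable : ∀ w ∈ W, ∀ c ∉ W, Defeats P w c := by
    intro w hw c hc
    rw [hW] at hw hc
    simp only [Finset.mem_filter, Finset.mem_univ, true_and, not_lt] at hw hc
    exact score_lt_imp P hP hSP hN (lt_of_lt_of_le hw hc)
  refine ⟨?_, stable⟩
  intro a ha b hb c hac hcb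
  by_contra hc
  have h1 : Defeats P a c := stable a ha c hc
  have h2 : Defeats P b c := stable b hb c hc
  have hac' : a < c := lt_of_le_of_ne hac (by rintro rfl; exact hc ha)
  have hcb' : c < b := lt_of_le_of_ne hcb (by rintro rfl; exact hc hb)
  have hdisj : (Finset.univ.filter fun v => P v a c) ∩
      (Finset.univ.filter fun v => P v b c) = ∅ := by
    rw [Finset.eq_empty_iff_forall_notMem]
    intro v hv
    simp only [Finset.mem_inter, Finset.mem_filter, Finset.mem_univ, true_and] at hv
    exact hSP v a c b hac' hcb' ⟨hv.1, hv.2⟩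
  have hle : prefCount P a c + prefCount P b c ≤ N := by
    have hu := Finset.card_union_add_card_inter
      (Finset.univ.filter fun v => P v a c) (Finset.univ.filter fun v => P v b c)
    rw [hdisj] at hu
    have hcard : ((Finset.univ.filter fun v => P v a c) ∪
        (Finset.univ.filter fun v => P v b c)).card ≤ N := by
      have := Finset.card_le_card (Finset.subset_univ
        ((Finset.univ.filter fun v => P v a c) ∪ (Finset.univ.filter fun v => P v b c)))
      simpa using this
    unfold prefCount
    simp only [Finset.card_empty] at hu
    omega
  unfold Defeats at h1 h2
  omega
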